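/- Let A, Ã ∈ S_{d,K}, and suppose B := AᵀÃÃᵀA is symmetric positive semidefinite with all eigenvalues in [0,1] and AᵀÃ = B^{1/2}. Then ‖ÃÃᵀ − AAᵀ‖² = 2 tr(I_K − B), ‖Ã − A‖² = 2 tr(I_K − B^{1/2}), and consequently ‖ÃÃᵀ − AAᵀ‖² ≥ ‖Ã − A‖². -/

import Mathlib

open Matrix

/-- The square root of a positive semidefinite matrix (removed from Mathlib; old definition). -/
noncomputable def Matrix.PosSemidef.sqrt {n 𝕜 : Type*} [Fintype n] [DecidableEq n] [RCLike 𝕜] [PartialOrder 𝕜]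
    {A : Matrix n n 𝕜} (hA : A.PosSemidef) : Matrix n n 𝕜 :=
  (hA.1.eigenvectorUnitary : Matrix n n 𝕜) *
    diagonal ((RCLike.ofReal : ℝ → 𝕜) ∘ (√·) ∘ hA.1.eigenvalues) *
  (star hA.1.eigenvectorUnitary : Matrix n n 𝕜)

lemma Matrix.PosSemidef.sqrt_mul_self {K : ℕ} {A : Matrix (Fin K) (Fin K) ℝ}
    (hA : A.PosSemidef) : hA.sqrt * hA.sqrt = A := by
  have hU : (star hA.1.eigenvectorUnitary : Matrix (Fin K) (Fin K) ℝ) *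
      (hA.1.eigenvectorUnitary : Matrix (Fin K) (Fin K) ℝ) = 1 :=
    Unitary.coe_star_mul_self hA.1.eigenvectorUnitary
  have hspec := hA.1.spectral_theorem
  rw [Unitary.conjStarAlgAut_apply] at hspec
  conv_rhs => rw [hspec]
  set U : Matrix (Fin K) (Fin K) ℝ := (hA.1.eigenvectorUnitary : Matrix (Fin K) (Fin K) ℝ)
  set E : Matrix (Fin K) (Fin K) ℝ :=
    diagonal ((RCLike.ofReal : ℝ → ℝ) ∘ (√·) ∘ hA.1.eigenvalues)
  have hthis : (U * E * star U) * (U * E * star U) = U * (E * E) * star U := by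
    rw [Matrix.mul_assoc (U * E), ← Matrix.mul_assoc (star U) (U * E) (star U),
      ← Matrix.mul_assoc (star U) U E, hU, Matrix.one_mul]
    simp [Matrix.mul_assoc]
  change (U * E * star U) * (U * E * star U) = _
  rw [hthis, Matrix.diagonal_mul_diagonal]
  refine congrArg (fun X => U * X * star U) ?_
  congr 1
  funext i
  simp [Real.mul_self_sqrt (hA.eigenvalues_nonneg i)]

lemma Matrix.PosSemidef.posSemidef_sqrt {K : ℕ} {A : Matrix (Fin K) (Fin K) ℝ}
    (hA : A.PosSemidef) : hA.sqrt.PosSemidef := by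
  rw [Matrix.PosSemidef.sqrt]
  refine (IsUnit.posSemidef_star_right_conjugate_iff (Unitary.isUnit_coe)).2 ?_
  rw [posSemidef_diagonal_iff]
  intro i
  simp [Real.sqrt_nonneg]

/-- Frobenius norm of a real matrix. -/
noncomputable def frob {m n : ℕ} (M : Matrix (Fin m) (Fin n) ℝ) : ℝ :=
  Real.sqrt (∑ i, ∑ j, (M i j) ^ 2)

lemma frob_sq {m n : ℕ} (M : Matrix (Fin m) (Fin n) ℝ) :
    frob M ^ 2 = (Mᵀ * M).trace := by
  rw [frob, Real.sq_sqrt (by positivity)]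
  simp only [Matrix.trace, Matrix.diag, Matrix.mul_apply, Matrix.transpose_apply]
  rw [Finset.sum_comm]
  simp [pow_two]

lemma trace_spec {K : ℕ} (S : Matrix (Fin K) (Fin K) ℝ) (hS : S.IsHermitian) :
    S.trace = ∑ i, hS.eigenvalues i ∧ (S * S).trace = ∑ i, hS.eigenvalues i ^ 2 := by
  set U : Matrix (Fin K) (Fin K) ℝ := (hS.eigenvectorUnitary : Matrix (Fin K) (Fin K) ℝ) with hUdef
  set D : Matrix (Fin K) (Fin K) ℝ := diagonal (RCLike.ofReal ∘ hS.eigenvalues) with hDdef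
  have hU : star U * U = 1 := Unitary.coe_star_mul_self hS.eigenvectorUnitary
  have hspec : S = U * D * star U := hS.spectral_theorem
  constructor
  · conv_lhs => rw [hspec]
    rw [Matrix.trace_mul_cycle, hU, Matrix.one_mul, hDdef]
    simp [Matrix.trace_diagonal]
  · have hthis : (U * D * star U) * (U * D * star U) = U * (D * D) * star U := by
      rw [Matrix.mul_assoc (U * D), ← Matrix.mul_assoc (star U) (U * D) (star U),
        ← Matrix.mul_assoc (star U) U D, hU, Matrix.one_mul]
      simp [Matrix.mul_assoc]
    conv_lhs => rw [hspec, hthis]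
    rw [Matrix.trace_mul_cycle, hU, Matrix.one_mul, hDdef, Matrix.diagonal_mul_diagonal]
    simp [Matrix.trace_diagonal, pow_two]

theorem stmt12 {d K : ℕ} (A B : Matrix (Fin d) (Fin K) ℝ)
    (hA : Aᵀ * A = 1) (hBs : Bᵀ * B = 1)
    (hB : (Aᵀ * (B * Bᵀ) * A).PosSemidef)
    (hB1 : (1 - Aᵀ * (B * Bᵀ) * A).PosSemidef)
    (hAB : Aᵀ * B = hB.sqrt) :
    frob (B * Bᵀ - A * Aᵀ) ^ 2 = 2 * (1 - Aᵀ * (B * Bᵀ) * A).trace ∧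
    frob (B - A) ^ 2 = 2 * (1 - hB.sqrt).trace ∧
    frob (B - A) ^ 2 ≤ frob (B * Bᵀ - A * Aᵀ) ^ 2 := by
  set M := Aᵀ * (B * Bᵀ) * A with hM
  set S := hB.sqrt with hSdef
  have hSS : S * S = M := hB.sqrt_mul_self
  have h1 : frob (B * Bᵀ - A * Aᵀ) ^ 2 = 2 * (1 - M).trace := by
    rw [frob_sq]
    have hPt : (B * Bᵀ - A * Aᵀ)ᵀ = B * Bᵀ - A * Aᵀ := by
      simp [Matrix.transpose_sub, Matrix.transpose_mul]
    rw [hPt]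
    have expand : (B * Bᵀ - A * Aᵀ) * (B * Bᵀ - A * Aᵀ) =
        B * Bᵀ * (B * Bᵀ) - B * Bᵀ * (A * Aᵀ) - A * Aᵀ * (B * Bᵀ) + A * Aᵀ * (A * Aᵀ) := by
      noncomm_ring
    have hP2 : B * Bᵀ * (B * Bᵀ) = B * Bᵀ := by
      rw [Matrix.mul_assoc, ← Matrix.mul_assoc Bᵀ, hBs, Matrix.one_mul]
    have hQ2 : A * Aᵀ * (A * Aᵀ) = A * Aᵀ := by
      rw [Matrix.mul_assoc, ← Matrix.mul_assoc Aᵀ, hA, Matrix.one_mul]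
    have htP : (B * Bᵀ).trace = (K : ℝ) := by
      rw [Matrix.trace_mul_comm, hBs, Matrix.trace_one]; simp
    have htQ : (A * Aᵀ).trace = (K : ℝ) := by
      rw [Matrix.trace_mul_comm, hA, Matrix.trace_one]; simp
    have htPQ : (B * Bᵀ * (A * Aᵀ)).trace = M.trace := by
      rw [Matrix.trace_mul_comm, Matrix.mul_assoc, Matrix.trace_mul_comm, hM]
    have htQP : (A * Aᵀ * (B * Bᵀ)).trace = M.trace := by
      rw [Matrix.mul_assoc, Matrix.trace_mul_comm, hM]
    rw [expand, Matrix.trace_add, Matrix.trace_sub, Matrix.trace_sub, hP2, hQ2, htP, htQ,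
      htPQ, htQP, Matrix.trace_sub, Matrix.trace_one]
    simp only [Fintype.card_fin]
    ring
  have h2 : frob (B - A) ^ 2 = 2 * (1 - S).trace := by
    rw [frob_sq]
    have expand : (B - A)ᵀ * (B - A) = Bᵀ * B - Bᵀ * A - Aᵀ * B + Aᵀ * A := by
      rw [Matrix.transpose_sub, Matrix.sub_mul, Matrix.mul_sub, Matrix.mul_sub]
      abel
    have hBA : (Bᵀ * A).trace = S.trace := by
      rw [← Matrix.trace_transpose (Bᵀ * A), Matrix.transpose_mul, Matrix.transpose_transpose,
        hAB]
    rw [expand, Matrix.trace_add, Matrix.trace_sub, Matrix.trace_sub, hA, hBs, hBA, hAB,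
      Matrix.trace_sub, Matrix.trace_one]
    simp only [Fintype.card_fin]
    ring
  refine ⟨h1, h2, ?_⟩
  rw [h1, h2]
  have hSh : S.IsHermitian := hB.posSemidef_sqrt.1
  obtain ⟨ht1, ht2⟩ := trace_spec S hSh
  have hev_nonneg : ∀ i, 0 ≤ hSh.eigenvalues i := fun i =>
    hB.posSemidef_sqrt.eigenvalues_nonneg i
  have hev_le : ∀ i, hSh.eigenvalues i ≤ 1 := by
    intro i
    set v := ⇑(hSh.eigenvectorBasis i) with hv
    have hmv : S *ᵥ v = hSh.eigenvalues i • v := hSh.mulVec_eigenvectorBasis i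
    have hMv : M *ᵥ v = (hSh.eigenvalues i ^ 2) • v := by
      rw [← hSS, ← Matrix.mulVec_mulVec, hmv, Matrix.mulVec_smul, hmv, smul_smul, pow_two]
    have hvn : v ⬝ᵥ v = 1 := by
      have h2 : (inner ℝ (hSh.eigenvectorBasis i) (hSh.eigenvectorBasis i) : ℝ) = 1 := by
        rw [real_inner_self_eq_norm_sq, hSh.eigenvectorBasis.orthonormal.1 i]; norm_num
      rw [← h2, PiLp.inner_apply]
      rfl
    have hpsd := hB1.dotProduct_mulVec_nonneg v
    rw [Matrix.sub_mulVec, Matrix.one_mulVec, hMv, dotProduct_sub, dotProduct_smul] at hpsd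
    have hstar : star v = v := by simp
    rw [hstar, hvn] at hpsd
    simp only [smul_eq_mul, RCLike.re_to_real] at hpsd
    nlinarith [hev_nonneg i]
  have key : M.trace ≤ S.trace := by
    rw [← hSS, ht1, ht2]
    apply Finset.sum_le_sum
    intro i _
    nlinarith [hev_nonneg i, hev_le i]
  rw [Matrix.trace_sub, Matrix.trace_sub]
  linarith
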